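/- In a primitive Pythagorean triple whose odd leg γ is a perfect square, the inradius diameter 2ρ = β + γ - α is a perfect square if and only if the exradius diameter 2ρ_β = α + β - γ is a perfect square. -/

import Mathlib

theorem inradius_square_iff_exradius_beta_square (α β γ : ℕ)
    (hα : 0 < α) (hβ : 0 < β) (hγ : 0 < γ)
    (hpyth : β ^ 2 + γ ^ 2 = α ^ 2) (hcop : Nat.gcd β γ = 1)
    (hbeta : Even β) (hgamma : Odd γ) (hsq : ∃ s : ℕ, γ = s ^ 2) :
    (∃ u : ℕ, β + γ - α = u ^ 2) ↔ (∃ v : ℕ, α + β - γ = v ^ 2) := by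
  obtain ⟨s, hs⟩ := hsq
  have hs0 : 0 < s := Nat.pos_of_ne_zero (by rintro rfl; simp at hs; omega)
  -- basic inequalities
  have hβα : β < α := by nlinarith
  have hγα : γ < α := by nlinarith
  have hle1 : α ≤ β + γ := by nlinarith
  have hle2 : γ ≤ α + β := by omega
  -- α is odd
  have hαodd : Odd α := by
    rcases Nat.even_or_odd α with h | h
    · exfalso
      have h1 : Even (α ^ 2) := Nat.even_pow.mpr ⟨h, two_ne_zero⟩
      have h2 : Even (β ^ 2) := Nat.even_pow.mpr ⟨hbeta, two_ne_zero⟩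
      have h3 : Odd (γ ^ 2) := hgamma.pow
      obtain ⟨x, hx⟩ := h1
      obtain ⟨y, hy⟩ := h2
      obtain ⟨z, hz⟩ := h3
      omega
    · exact h
  -- gcd α β = 1
  have hgαβ : Nat.gcd α β = 1 := by
    have h1 : (Nat.gcd α β) ^ 2 ∣ α ^ 2 := pow_dvd_pow_of_dvd (Nat.gcd_dvd_left _ _) 2
    have h2 : (Nat.gcd α β) ^ 2 ∣ β ^ 2 := pow_dvd_pow_of_dvd (Nat.gcd_dvd_right _ _) 2
    have h3 : (Nat.gcd α β) ^ 2 ∣ γ ^ 2 := by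
      have : γ ^ 2 = α ^ 2 - β ^ 2 := by omega
      rw [this]; exact Nat.dvd_sub h1 h2
    have h4 : Nat.gcd α β ∣ γ := (Nat.pow_dvd_pow_iff (two_ne_zero)).mp h3
    have h5 : Nat.gcd α β ∣ Nat.gcd β γ := Nat.dvd_gcd (Nat.gcd_dvd_right _ _) h4
    rw [hcop] at h5
    exact Nat.dvd_one.mp h5
  -- gcd (α+β) (α−β) = 1
  have hgsum : Nat.gcd (α + β) (α - β) = 1 := by
    set d := Nat.gcd (α + β) (α - β) with hd
    have hd1 : d ∣ α + β := Nat.gcd_dvd_left _ _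
    have hd2 : d ∣ α - β := Nat.gcd_dvd_right _ _
    have hsumodd : Odd (α + β) := hαodd.add_even hbeta
    have hdodd : Odd d := by
      rcases Nat.even_or_odd d with h | h
      · exfalso
        have h2 : 2 ∣ α + β := dvd_trans (even_iff_two_dvd.mp h) hd1
        exact (Nat.not_even_iff_odd.mpr hsumodd) (even_iff_two_dvd.mpr h2)
      · exact h
    have hd2α : d ∣ 2 * α := by
      have : 2 * α = (α + β) + (α - β) := by omega
      rw [this]; exact Nat.dvd_add hd1 hd2
    have hd2β : d ∣ 2 * β := by
      have : 2 * β = (α + β) - (α - β) := by omega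
      rw [this]; exact Nat.dvd_sub hd1 hd2
    have hcd2 : Nat.Coprime d 2 :=
      ((Nat.prime_two.coprime_iff_not_dvd).mpr (by
        rw [← even_iff_two_dvd]; exact Nat.not_even_iff_odd.mpr hdodd)).symm
    have hdα : d ∣ α := hcd2.dvd_of_dvd_mul_left hd2α
    have hdβ : d ∣ β := hcd2.dvd_of_dvd_mul_left hd2β
    have : d ∣ Nat.gcd α β := Nat.dvd_gcd hdα hdβ
    rw [hgαβ] at this
    exact Nat.dvd_one.mp this
  -- (α+β)(α−β) = γ²
  have hprod : (α + β) * (α - β) = γ ^ 2 := by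
    have : γ ^ 2 = α ^ 2 - β ^ 2 := by omega
    rw [this, Nat.sq_sub_sq]
  -- α+β and α−β are squares
  obtain ⟨k, hk⟩ : ∃ k : ℕ, α + β = k ^ 2 := by
    apply exists_eq_pow_of_mul_eq_pow (a := α + β) (b := α - β) (c := γ)
    · rw [Nat.isUnit_iff]; exact hgsum
    · exact hprod
  have hk0 : 0 < k := by
    rcases Nat.eq_zero_or_pos k with h | h
    · subst h; simp at hk; omega
    · exact h
  -- key identity
  have hkey : (β + γ - α) * (α + β) = γ * (α + β - γ) := by
    zify [hle1, hle2]
    have hz : (β : ℤ) ^ 2 + (γ : ℤ) ^ 2 = (α : ℤ) ^ 2 := by exact_mod_cast hpyth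
    linear_combination hz
  constructor
  · rintro ⟨u, hu⟩
    have heq : (u * k) ^ 2 = s ^ 2 * (α + β - γ) := by
      rw [mul_pow, ← hu, ← hk, hkey, hs]
    have hdvd : s ∣ u * k := by
      refine (Nat.pow_dvd_pow_iff two_ne_zero).mp ⟨α + β - γ, heq⟩
    obtain ⟨t, ht⟩ := hdvd
    refine ⟨t, ?_⟩
    have : s ^ 2 * (α + β - γ) = s ^ 2 * t ^ 2 := by
      rw [← heq, ht]; ring
    exact (Nat.eq_of_mul_eq_mul_left (by positivity) this)
  · rintro ⟨v, hv⟩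
    have heq : (s * v) ^ 2 = k ^ 2 * (β + γ - α) := by
      rw [mul_pow, ← hv, ← hs, ← hkey, hk]; ring
    have hdvd : k ∣ s * v := by
      refine (Nat.pow_dvd_pow_iff two_ne_zero).mp ⟨β + γ - α, heq⟩
    obtain ⟨t, ht⟩ := hdvd
    refine ⟨t, ?_⟩
    have : k ^ 2 * (β + γ - α) = k ^ 2 * t ^ 2 := by
      rw [← heq, ht]; ring
    exact (Nat.eq_of_mul_eq_mul_left (by positivity) this)
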